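/- arXiv:1904.09665 — 4 statements merged into one kernel-verified Lean document; each statement's English description precedes it below -/
import Mathlib

section
/- Let n ≥ 3 and on the unit sphere S^n write points as (ω sin φ, cos φ) with φ ∈ [0,π]. If f(φ) = -log((1/2) sin φ), then -Δ_{S^n} f = (sin φ)^{-2}((n-2)cos²φ - sin²φ), so that with V = ((n-2)cos²φ - sin²φ)/(sin²φ · log((1/2) sin φ)) one has (-Δ_{S^n} + V) f = 0. -/
open Real

/-- The Laplace–Beltrami operator on `S^n` acting on functions of the polar angle `φ`:
`Δ f = (sin φ)^{-(n-1)} ∂_φ ((sin φ)^{n-1} ∂_φ f)`. -/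
noncomputable def sphereLaplacian (n : ℕ) (f : ℝ → ℝ) (φ : ℝ) : ℝ :=
  ((Real.sin φ) ^ (n - 1))⁻¹ * deriv (fun t => (Real.sin t) ^ (n - 1) * deriv f t) φ

lemma deriv_f_aux (t : ℝ) (ht : Real.sin t ≠ 0) :
    deriv (fun ψ => -Real.log (Real.sin ψ / 2)) t = -(Real.cos t / Real.sin t) := by
  have h1 : HasDerivAt (fun ψ => Real.sin ψ / 2) (Real.cos t / 2) t :=
    (Real.hasDerivAt_sin t).div_const 2
  have h2 : HasDerivAt (fun ψ => Real.log (Real.sin ψ / 2))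
      ((Real.cos t / 2) / (Real.sin t / 2)) t := h1.log (by simpa using ht)
  have h3 : HasDerivAt (fun ψ => -Real.log (Real.sin ψ / 2))
      (-((Real.cos t / 2) / (Real.sin t / 2))) t := h2.neg
  rw [h3.deriv]
  field_simp

/-- on `S^n`, `n ≥ 3`, the radial function `f(φ) = -log((1/2) sin φ)` satisfies
`-Δ f = (sin φ)^{-2}((n-2) cos² φ - sin² φ)`, and hence with
`V = ((n-2)cos²φ - sin²φ)/(sin²φ · log((1/2) sin φ))` one has `(-Δ + V) f = 0`. -/
theorem stmt_0 (n : ℕ) (hn : 3 ≤ n) (φ : ℝ) (hφ : φ ∈ Set.Ioo 0 Real.pi)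
    (f V : ℝ → ℝ)
    (hf : f = fun ψ => -Real.log (Real.sin ψ / 2))
    (hV : V = fun ψ =>
      (((n : ℝ) - 2) * Real.cos ψ ^ 2 - Real.sin ψ ^ 2) /
        (Real.sin ψ ^ 2 * Real.log (Real.sin ψ / 2))) :
    (-(sphereLaplacian n f φ) =
        (Real.sin φ ^ 2)⁻¹ * (((n : ℝ) - 2) * Real.cos φ ^ 2 - Real.sin φ ^ 2)) ∧
      (-(sphereLaplacian n f φ) + V φ * f φ = 0) := by
  obtain ⟨m, rfl⟩ : ∃ m, n = m + 3 := ⟨n - 3, by omega⟩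
  obtain ⟨hφ0, hφπ⟩ := hφ
  have hs : 0 < Real.sin φ := Real.sin_pos_of_pos_of_lt_pi hφ0 hφπ
  have hsne : Real.sin φ ≠ 0 := ne_of_gt hs
  -- eventually, sin is positive
  have hev : ∀ᶠ t in nhds φ, 0 < Real.sin t :=
    (Real.continuous_sin.tendsto φ).eventually (eventually_gt_nhds hs)
  have hE : (fun t => (Real.sin t) ^ (m + 2) * deriv f t)
      =ᶠ[nhds φ] fun t => -(Real.cos t * (Real.sin t) ^ (m + 1)) := by
    filter_upwards [hev] with t ht
    rw [hf, deriv_f_aux t (ne_of_gt ht)]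
    field_simp
    ring
  have hDer : HasDerivAt (fun t => -(Real.cos t * (Real.sin t) ^ (m + 1)))
      (-((-Real.sin φ) * (Real.sin φ) ^ (m + 1) +
        Real.cos φ * ((↑(m + 1) : ℝ) * (Real.sin φ) ^ m * Real.cos φ))) φ := by
    exact ((Real.hasDerivAt_cos φ).mul ((Real.hasDerivAt_sin φ).pow (m + 1))).neg
  have hkey : deriv (fun t => (Real.sin t) ^ (m + 2) * deriv f t) φ =
      -((-Real.sin φ) * (Real.sin φ) ^ (m + 1) +
        Real.cos φ * ((↑(m + 1) : ℝ) * (Real.sin φ) ^ m * Real.cos φ)) := by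
    rw [hE.deriv_eq, hDer.deriv]
  have hLap : sphereLaplacian (m + 3) f φ =
      ((Real.sin φ) ^ (m + 2))⁻¹ *
      -((-Real.sin φ) * (Real.sin φ) ^ (m + 1) +
        Real.cos φ * ((↑(m + 1) : ℝ) * (Real.sin φ) ^ m * Real.cos φ)) := by
    have : m + 3 - 1 = m + 2 := rfl
    rw [sphereLaplacian, this, hkey]
  have h1 : -(sphereLaplacian (m + 3) f φ) =
      (Real.sin φ ^ 2)⁻¹ * (((↑(m + 3) : ℝ) - 2) * Real.cos φ ^ 2 - Real.sin φ ^ 2) := by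
    rw [hLap]
    push_cast
    field_simp
    ring
  refine ⟨h1, ?_⟩
  have hlt : Real.sin φ / 2 < 1 := by
    have := Real.sin_le_one φ; linarith
  have hlogne : Real.log (Real.sin φ / 2) ≠ 0 := by
    have : Real.log (Real.sin φ / 2) < 0 :=
      Real.log_neg (by positivity) hlt
    linarith
  rw [h1, hV, hf]
  field_simp
  ring
end

section
/- The potential V(φ) = ((n-2)cos²φ - sin²φ)/(sin²φ · log((1/2) sin φ)) on S^n (n ≥ 3), depending only on the polar angle φ, belongs to L^{n/2}(S^n) but not to L^{n/2+δ}(S^n) for any δ > 0. -/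
open Real MeasureTheory Set Filter Topology

/-- Auxiliary integrability: `x ↦ x⁻¹ * (-log (x/2))^(-p)` is integrable on `(0, b]`
for `p > 1` and `0 < b < 2`. -/
lemma aux_int {p b : ℝ} (hp : 1 < p) (hb : 0 < b) (hb2 : b < 2) :
    IntegrableOn (fun x : ℝ => x⁻¹ * (-Real.log (x / 2)) ^ (-p)) (Ioc 0 b) := by
  have hp0 : 0 < p - 1 := by linarith
  set F : ℝ → ℝ := fun x => (-Real.log (x / 2)) ^ (1 - p) / (p - 1) with hF
  have hderiv : ∀ x ∈ Ioo (0 : ℝ) b,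
      HasDerivAt F (x⁻¹ * (-Real.log (x / 2)) ^ (-p)) x := by
    intro x hx
    have hx0 : 0 < x := hx.1
    have hx2 : x / 2 < 1 := by linarith [hx.2]
    have hL : 0 < -Real.log (x / 2) := by
      have := Real.log_neg (half_pos hx0) hx2
      linarith
    have h1 : HasDerivAt (fun y : ℝ => -Real.log (y / 2)) (-x⁻¹) x := by
      have h2 : HasDerivAt (fun y : ℝ => y / 2) (1 / 2) x := (hasDerivAt_id x).div_const 2
      have h3 := (Real.hasDerivAt_log (half_pos hx0).ne').comp x h2
      have h4 : HasDerivAt (fun y : ℝ => Real.log (y / 2)) x⁻¹ x := by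
        exact h3.congr_deriv (by rw [inv_div]; ring)
      exact h4.neg
    have h4 := (Real.hasDerivAt_rpow_const (p := 1 - p) (Or.inl hL.ne')).comp x h1
    have h5 := h4.div_const (p - 1)
    refine h5.congr_deriv (Eq.symm ?_)
    have he : (1 : ℝ) - p - 1 = -p - 1 + 1 := by ring
    have h6 : (-Real.log (x / 2)) ^ (1 - p - 1) = (-Real.log (x / 2)) ^ (-p) := by
      norm_num
    rw [h6, eq_div_iff hp0.ne']
    ring
  apply intervalIntegral.integrableOn_deriv_of_nonneg _ hderiv
  · intro x hx
    have hx2 : x / 2 < 1 := by linarith [hx.2]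
    have hL : 0 < -Real.log (x / 2) := by
      have := Real.log_neg (half_pos hx.1) hx2
      linarith
    exact mul_nonneg (inv_nonneg.2 hx.1.le) (Real.rpow_nonneg hL.le _)
  · -- continuity of F on [0, b]
    intro x hx
    rcases eq_or_lt_of_le hx.1 with h0 | h0
    · -- x = 0
      have hF0 : F 0 = 0 := by
        simp only [hF]
        rw [show (0 : ℝ) / 2 = 0 by norm_num, Real.log_zero, neg_zero,
          Real.zero_rpow (by linarith : (1 : ℝ) - p ≠ 0), zero_div]
      have htend : Tendsto F (𝓝[>] (0 : ℝ)) (𝓝 0) := by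
        have l1 : Tendsto (fun y : ℝ => y / 2) (𝓝[>] (0 : ℝ)) (𝓝[>] (0 : ℝ)) := by
          apply tendsto_nhdsWithin_of_tendsto_nhds_of_eventually_within
          · have : Tendsto (fun y : ℝ => y / 2) (𝓝 (0 : ℝ)) (𝓝 ((0 : ℝ) / 2)) :=
              (continuous_id.div_const 2).tendsto 0
            simpa using this.mono_left nhdsWithin_le_nhds
          · filter_upwards [self_mem_nhdsWithin] with y hy
            exact half_pos (mem_Ioi.mp hy)
        have l2 : Tendsto (fun y : ℝ => -Real.log (y / 2)) (𝓝[>] (0 : ℝ)) atTop :=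
          tendsto_neg_atBot_atTop.comp (Real.tendsto_log_nhdsGT_zero.comp l1)
        have l3 : Tendsto (fun t : ℝ => t ^ (1 - p)) atTop (𝓝 0) := by
          have := tendsto_rpow_neg_atTop hp0
          simpa [neg_sub] using this
        have l4 := (l3.comp l2).div_const (p - 1)
        simpa using l4
      rw [← h0, ← continuousWithinAt_diff_self, ContinuousWithinAt, hF0]
      exact htend.mono_left (nhdsWithin_mono _
        (fun y hy => lt_of_le_of_ne hy.1.1 (Ne.symm hy.2)))
    · -- 0 < x
      have hxb : x ≤ b := hx.2
      have hx2 : x / 2 < 1 := by linarith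
      have hL : -Real.log (x / 2) ≠ 0 := by
        have := Real.log_neg (half_pos h0) hx2
        intro h; linarith [neg_eq_zero.mp h]
      have c1 : ContinuousAt (fun y : ℝ => -Real.log (y / 2)) x :=
        (((continuous_id.div_const 2).continuousAt).log (half_pos h0).ne').neg
      exact ((c1.rpow_const (Or.inl hL)).div_const _).continuousWithinAt

set_option maxHeartbeats 1000000 in
lemma stmt2_part1 (n : ℕ) (hn : 3 ≤ n) (V : ℝ → ℝ)
    (hV : V = fun φ =>
      (((n : ℝ) - 2) * Real.cos φ ^ 2 - Real.sin φ ^ 2) /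
        (Real.sin φ ^ 2 * Real.log (Real.sin φ / 2))) :
    IntegrableOn (fun φ => |V φ| ^ ((n : ℝ) / 2) * Real.sin φ ^ (n - 1))
        (Set.Ioo 0 Real.pi) := by
  have hπ : π < 3.15 := Real.pi_lt_d2
  have hπ0 : (0:ℝ) < π := Real.pi_pos
  have hn' : (3:ℝ) ≤ (n:ℝ) := by exact_mod_cast hn
  have hn1 : 1 ≤ n := by omega
  have hVc : ContinuousOn V (Ioo 0 π) := by
    rw [hV]
    apply ContinuousOn.div
    · exact Continuous.continuousOn (by continuity)
    · exact (Real.continuous_sin.pow 2).continuousOn.mul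
        (((Real.continuous_sin.div_const 2).continuousOn).log
          (fun x hx => by
            have := Real.sin_pos_of_pos_of_lt_pi hx.1 hx.2
            positivity))
    · intro x hx
      have hs := Real.sin_pos_of_pos_of_lt_pi hx.1 hx.2
      have hlog : Real.log (Real.sin x / 2) < 0 :=
        Real.log_neg (by positivity) (by linarith [Real.sin_le_one x])
      exact mul_ne_zero (by positivity) hlog.ne
  have hGc : ContinuousOn (fun φ => |V φ| ^ ((n:ℝ)/2) * Real.sin φ ^ (n - 1)) (Ioo 0 π) :=
    (hVc.abs.rpow_const (fun x _ => Or.inr (by positivity))).mul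
      ((Real.continuous_sin.pow _).continuousOn)
  have hp1 : 1 < (n:ℝ)/2 := by linarith
  have hp0 : (0:ℝ) ≤ (n:ℝ)/2 := by positivity
  have key : IntegrableOn (fun φ => |V φ| ^ ((n : ℝ) / 2) * Real.sin φ ^ (n - 1))
      (Ioc 0 (π/2)) := by
    have hb2 : π/2 < 2 := by linarith
    have hint := (aux_int hp1 (by positivity) hb2).const_mul
      (2 * ((n:ℝ)-1) ^ ((n:ℝ)/2))
    apply Integrable.mono' hint
    · exact (hGc.mono
        (fun x hx => ⟨hx.1, lt_of_le_of_lt hx.2 (by linarith)⟩)).aestronglyMeasurable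
        measurableSet_Ioc
    · filter_upwards [ae_restrict_mem measurableSet_Ioc] with x hx
      obtain ⟨hx0, hx2⟩ := hx
      have hxπ : x < π := by linarith
      have hs0 : 0 < Real.sin x := Real.sin_pos_of_pos_of_lt_pi hx0 hxπ
      have hs1 : Real.sin x ≤ 1 := Real.sin_le_one x
      have hsx : Real.sin x ≤ x := Real.sin_le hx0.le
      have hxs : x/2 ≤ Real.sin x := by
        have h := Real.mul_le_sin hx0.le hx2
        have h6 : (1:ℝ)/2 ≤ 2/π := by
          rw [div_le_div_iff₀ (by norm_num) hπ0]; linarith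
        have h7 : x/2 ≤ 2/π * x := by
          nlinarith [mul_nonneg (by linarith : (0:ℝ) ≤ 2/π - 1/2) hx0.le]
        linarith
      have hx21 : x / 2 < 1 := by linarith
      have hs21 : Real.sin x / 2 < 1 := by linarith
      have hlogneg : Real.log (Real.sin x / 2) < 0 :=
        Real.log_neg (by positivity) hs21
      have hLs : 0 < -Real.log (Real.sin x / 2) := by linarith
      have hLx : 0 < -Real.log (x / 2) := by
        have := Real.log_neg (by positivity) hx21; linarith
      have hLxs : -Real.log (x/2) ≤ -Real.log (Real.sin x/2) := by
        have := Real.log_le_log (by positivity : (0:ℝ) < Real.sin x / 2)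
          (by linarith : Real.sin x / 2 ≤ x / 2)
        linarith
      have hden : 0 < Real.sin x^2 * (-Real.log (Real.sin x/2)) := by positivity
      have hpy := Real.sin_sq_add_cos_sq x
      have hc2 : Real.cos x^2 ≤ 1 := by nlinarith [sq_nonneg (Real.sin x)]
      have h8 : ((n:ℝ)-2) * Real.cos x^2 ≤ (n:ℝ)-2 :=
        mul_le_of_le_one_right (by linarith) hc2
      have h9 : (0:ℝ) ≤ ((n:ℝ)-2) * Real.cos x^2 :=
        mul_nonneg (by linarith) (sq_nonneg _)
      have hnum : |((n:ℝ)-2) * Real.cos x ^ 2 - Real.sin x ^ 2| ≤ (n:ℝ)-1 := by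
        rw [abs_le]
        constructor <;> [linarith [sq_nonneg (Real.cos x)]; linarith [sq_nonneg (Real.sin x)]]
      have hVx : |V x| ≤ ((n:ℝ)-1) / (Real.sin x^2 * (-Real.log (Real.sin x/2))) := by
        simp only [hV]
        rw [abs_div, abs_mul, abs_of_nonneg (sq_nonneg (Real.sin x)), abs_of_neg hlogneg]
        exact div_le_div_of_nonneg_right hnum hden.le
      have hsq : (Real.sin x^2 : ℝ) ^ ((n:ℝ)/2) = Real.sin x^(n-1) * Real.sin x := by
        rw [← Real.rpow_natCast (Real.sin x) 2, ← Real.rpow_mul hs0.le]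
        rw [show ((2:ℕ):ℝ) * ((n:ℝ)/2) = (n:ℝ) by push_cast; ring, Real.rpow_natCast]
        rw [← pow_succ]
        congr 1
        omega
      rw [Real.norm_of_nonneg (mul_nonneg (Real.rpow_nonneg (abs_nonneg _) _)
        (pow_nonneg hs0.le _))]
      calc |V x| ^ ((n:ℝ)/2) * Real.sin x ^ (n-1)
          ≤ (((n:ℝ)-1)/(Real.sin x^2 * (-Real.log (Real.sin x/2)))) ^ ((n:ℝ)/2)
            * Real.sin x ^ (n-1) :=
            mul_le_mul_of_nonneg_right (Real.rpow_le_rpow (abs_nonneg _) hVx hp0)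
              (pow_nonneg hs0.le _)
        _ = ((n:ℝ)-1) ^ ((n:ℝ)/2) *
            ((Real.sin x)⁻¹ * (((-Real.log (Real.sin x/2)) ^ ((n:ℝ)/2))⁻¹)) := by
            rw [Real.div_rpow (by linarith : (0:ℝ) ≤ (n:ℝ)-1) hden.le,
              Real.mul_rpow (sq_nonneg (Real.sin x)) hLs.le, hsq]
            have h1 : Real.sin x ≠ 0 := hs0.ne'
            have h2 : (-Real.log (Real.sin x/2)) ^ ((n:ℝ)/2) ≠ 0 :=
              (Real.rpow_pos_of_pos hLs _).ne'
            field_simp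
        _ ≤ ((n:ℝ)-1) ^ ((n:ℝ)/2) *
            ((2 * x⁻¹) * (((-Real.log (x/2)) ^ ((n:ℝ)/2))⁻¹)) := by
            apply mul_le_mul_of_nonneg_left ?_ (Real.rpow_nonneg (by linarith) _)
            apply mul_le_mul ?_ ?_
              (inv_nonneg.2 (Real.rpow_nonneg hLs.le _)) (by positivity)
            · have h7 : (Real.sin x)⁻¹ ≤ (x/2)⁻¹ :=
                inv_anti₀ (by positivity) hxs
              calc (Real.sin x)⁻¹ ≤ (x/2)⁻¹ := h7
                _ = 2 * x⁻¹ := by rw [inv_div]; ring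
            · exact inv_anti₀ (Real.rpow_pos_of_pos hLx _)
                (Real.rpow_le_rpow hLx.le hLxs hp0)
        _ = 2*((n:ℝ)-1) ^ ((n:ℝ)/2) * (x⁻¹ * (-Real.log (x/2)) ^ (-((n:ℝ)/2))) := by
            rw [Real.rpow_neg hLx.le]
            ring
  have h1 : IntervalIntegrable (fun φ => |V φ| ^ ((n : ℝ) / 2) * Real.sin φ ^ (n - 1))
      volume 0 (π/2) :=
    (intervalIntegrable_iff_integrableOn_Ioc_of_le (by positivity)).mpr key
  have h2 := h1.comp_sub_left π
  have h2' : IntervalIntegrable (fun φ => |V φ| ^ ((n : ℝ) / 2) * Real.sin φ ^ (n - 1))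
      volume (π/2) π := by
    rw [show π - 0 = π by ring, show π - π/2 = π/2 by ring] at h2
    apply IntervalIntegrable.symm
    convert h2 using 1
    funext x
    simp only [hV, Real.sin_pi_sub, Real.cos_pi_sub, neg_sq]
  exact (intervalIntegrable_iff_integrableOn_Ioo_of_le hπ0.le).mp (h1.trans h2')

set_option maxHeartbeats 1000000 in
lemma stmt2_part2 (n : ℕ) (hn : 3 ≤ n) (V : ℝ → ℝ)
    (hV : V = fun φ =>
      (((n : ℝ) - 2) * Real.cos φ ^ 2 - Real.sin φ ^ 2) /
        (Real.sin φ ^ 2 * Real.log (Real.sin φ / 2)))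
    (δ : ℝ) (hδ : 0 < δ) :
    ¬ IntegrableOn (fun φ => |V φ| ^ ((n : ℝ) / 2 + δ) * Real.sin φ ^ (n - 1))
        (Set.Ioo 0 Real.pi) := by
  intro hInt
  have hπ : π < 3.15 := Real.pi_lt_d2
  have hπ0 : (0:ℝ) < π := Real.pi_pos
  have hn' : (3:ℝ) ≤ (n:ℝ) := by exact_mod_cast hn
  have hn1 : 1 ≤ n := by omega
  set q : ℝ := (n:ℝ)/2 + δ with hqdef
  have hq : 0 < q := by rw [hqdef]; positivity
  set a : ℝ := δ / q with hadef
  have ha : 0 < a := div_pos hδ hq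
  have haq : a * q = δ := by rw [hadef]; field_simp
  have hε : (0:ℝ) < π/6 := by positivity
  have hIε := hInt.mono_set (Ioo_subset_Ioo le_rfl (by linarith : π/6 ≤ π))
  set c : ℝ := (1/4:ℝ)^q * a^q / (4:ℝ)^δ with hcdef
  have hc : 0 < c := by
    rw [hcdef]
    exact div_pos (mul_pos (Real.rpow_pos_of_pos (by norm_num) _)
      (Real.rpow_pos_of_pos ha _)) (Real.rpow_pos_of_pos (by norm_num) _)
  have hbound : ∀ x ∈ Ioo (0:ℝ) (π/6),
      c * x ^ (-1-δ) ≤ |V x| ^ q * Real.sin x ^ (n-1) := by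
    intro x hx
    obtain ⟨hx0, hx6⟩ := hx
    have hxπ2 : x ≤ π/2 := by linarith
    have hxπ : x < π := by linarith
    have hs0 : 0 < Real.sin x := Real.sin_pos_of_pos_of_lt_pi hx0 hxπ
    have hsx : Real.sin x ≤ x := Real.sin_le hx0.le
    have hxs : x/2 ≤ Real.sin x := by
      have h := Real.mul_le_sin hx0.le hxπ2
      have h6 : (1:ℝ)/2 ≤ 2/π := by
        rw [div_le_div_iff₀ (by norm_num) hπ0]; linarith
      have h7 : x/2 ≤ 2/π * x := by
        nlinarith [mul_nonneg (by linarith : (0:ℝ) ≤ 2/π - 1/2) hx0.le]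
      linarith
    have hs21 : Real.sin x/2 < 1 := by linarith [Real.sin_le_one x]
    have hlogneg : Real.log (Real.sin x / 2) < 0 :=
      Real.log_neg (by positivity) hs21
    have hLs : 0 < -Real.log (Real.sin x/2) := by linarith
    have hpy := Real.sin_sq_add_cos_sq x
    have hx525 : x ≤ 0.525 := by linarith
    have hxx : x^2 ≤ (0.525:ℝ)^2 := by nlinarith
    have hss : Real.sin x^2 ≤ x^2 := by nlinarith
    have h30 : (0:ℝ) ≤ ((n:ℝ)-3) * Real.cos x^2 :=
      mul_nonneg (by linarith) (sq_nonneg _)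
    have hnum : (1:ℝ)/4 ≤ ((n:ℝ)-2) * Real.cos x^2 - Real.sin x^2 := by
      nlinarith [h30, hxx, hss, hpy]
    have hden : 0 < Real.sin x^2 * (-Real.log (Real.sin x/2)) := by positivity
    have hVx : ((1:ℝ)/4) / (Real.sin x^2 * (-Real.log (Real.sin x/2))) ≤ |V x| := by
      simp only [hV]
      rw [abs_div, abs_mul, abs_of_nonneg (sq_nonneg (Real.sin x)), abs_of_neg hlogneg,
        abs_of_nonneg (by linarith : (0:ℝ) ≤ ((n:ℝ)-2) * Real.cos x^2 - Real.sin x^2)]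
      exact div_le_div_of_nonneg_right (by linarith) hden.le
    have hLub : -Real.log (Real.sin x/2) ≤ (4/x)^a / a := by
      have h1 : Real.log (x/4) ≤ Real.log (Real.sin x/2) :=
        Real.log_le_log (by positivity) (by linarith)
      have h2 : -Real.log (x/4) = Real.log (4/x) := by
        rw [← Real.log_inv, inv_div]
      have h3 := Real.log_le_rpow_div (by positivity : (0:ℝ) ≤ 4/x) ha
      linarith
    have hS2q : ((Real.sin x)^2) ^ q = Real.sin x ^ (2*q) := by
      rw [← Real.rpow_natCast (Real.sin x) 2, ← Real.rpow_mul hs0.le]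
      norm_num
    have hSn1 : Real.sin x^(n-1) = Real.sin x ^ ((n:ℝ)-1) := by
      rw [← Real.rpow_natCast (Real.sin x) (n-1), Nat.cast_sub hn1, Nat.cast_one]
    have hSexp : Real.sin x ^ ((n:ℝ)-1) * (Real.sin x ^ (2*q))⁻¹
        = Real.sin x ^ (-1-2*δ) := by
      rw [← Real.rpow_neg hs0.le, ← Real.rpow_add hs0]
      congr 1
      rw [hqdef]; ring
    have hBinv : (((4/x)^a/a)^q)⁻¹ = a^q * x^δ / (4:ℝ)^δ := by
      rw [Real.div_rpow (Real.rpow_nonneg (by positivity) _) ha.le,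
        ← Real.rpow_mul (by positivity : (0:ℝ) ≤ 4/x), haq,
        Real.div_rpow (by norm_num : (0:ℝ) ≤ 4) hx0.le]
      have h1 : ((4:ℝ)^δ : ℝ) ≠ 0 := (Real.rpow_pos_of_pos (by norm_num) _).ne'
      have h2 : (x^δ : ℝ) ≠ 0 := (Real.rpow_pos_of_pos hx0 _).ne'
      have h3 : (a^q : ℝ) ≠ 0 := (Real.rpow_pos_of_pos ha _).ne'
      field_simp
    have e3 : ((1/4:ℝ)/(Real.sin x^2 * (-Real.log (Real.sin x/2))))^q * Real.sin x^(n-1)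
        = (1/4:ℝ)^q * (Real.sin x^(-1-2*δ) * (((-Real.log (Real.sin x/2))^q)⁻¹)) := by
      rw [Real.div_rpow (by norm_num) hden.le,
        Real.mul_rpow (sq_nonneg (Real.sin x)) hLs.le, hS2q, div_eq_mul_inv, mul_inv,
        hSn1, ← hSexp]
      ring
    calc c * x ^ (-1-δ)
        = (1/4:ℝ)^q * (x^(-1-2*δ) * (a^q * x^δ / (4:ℝ)^δ)) := by
          rw [hcdef, show x^(-1-δ) = x^(-1-2*δ) * x^δ by
            rw [← Real.rpow_add hx0]; congr 1; ring]
          ring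
      _ ≤ (1/4:ℝ)^q * (Real.sin x^(-1-2*δ) * (((-Real.log (Real.sin x/2))^q)⁻¹)) := by
          apply mul_le_mul_of_nonneg_left ?_ (Real.rpow_nonneg (by norm_num) _)
          apply mul_le_mul
            (Real.rpow_le_rpow_of_nonpos hs0 hsx (by linarith : -1-2*δ ≤ 0))
            ?_ ?_ (Real.rpow_nonneg hs0.le _)
          · rw [← hBinv]
            exact inv_anti₀ (Real.rpow_pos_of_pos hLs _)
              (Real.rpow_le_rpow hLs.le hLub hq.le)
          · exact div_nonneg (mul_nonneg (Real.rpow_nonneg ha.le _)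
              (Real.rpow_nonneg hx0.le _)) (Real.rpow_nonneg (by norm_num) _)
      _ = ((1/4:ℝ)/(Real.sin x^2 * (-Real.log (Real.sin x/2))))^q * Real.sin x^(n-1) :=
          e3.symm
      _ ≤ |V x| ^ q * Real.sin x ^ (n-1) :=
          mul_le_mul_of_nonneg_right
            (Real.rpow_le_rpow (by positivity) hVx hq.le) (pow_nonneg hs0.le _)
  have hmeas : AEStronglyMeasurable (fun x : ℝ => c * x ^ (-1-δ))
      (volume.restrict (Ioo 0 (π/6))) := by
    apply ContinuousOn.aestronglyMeasurable ?_ measurableSet_Ioo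
    exact continuousOn_const.mul
      (continuousOn_id.rpow_const (fun x hx => Or.inl (ne_of_gt hx.1)))
  have hint2 : IntegrableOn (fun x : ℝ => c * x ^ (-1-δ)) (Ioo 0 (π/6)) := by
    apply Integrable.mono hIε hmeas
    filter_upwards [ae_restrict_mem measurableSet_Ioo] with x hx
    rw [Real.norm_of_nonneg (mul_nonneg hc.le (Real.rpow_nonneg hx.1.le _)),
      Real.norm_of_nonneg (mul_nonneg (Real.rpow_nonneg (abs_nonneg _) _)
        (pow_nonneg (Real.sin_pos_of_pos_of_lt_pi hx.1 (by linarith [hx.2])).le _))]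
    exact hbound x hx
  have hint3 : IntegrableOn (fun x : ℝ => x ^ (-1-δ)) (Ioo 0 (π/6)) := by
    have h := hint2.const_mul c⁻¹
    simpa [← mul_assoc, inv_mul_cancel₀ hc.ne', IntegrableOn] using h
  have := (intervalIntegral.integrableOn_Ioo_rpow_iff hε).mp hint3
  linarith

/-- the potential `V(φ) = ((n-2)cos²φ - sin²φ)/(sin²φ · log((1/2) sin φ))` on `S^n`
(`n ≥ 3`), depending only on the polar angle, belongs to `L^{n/2}(S^n)` but not to
`L^{n/2+δ}(S^n)` for any `δ > 0`.  In polar coordinates the measure on `S^n` has density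
`(sin φ)^{n-1} dφ dω`, so membership in `L^q(S^n)` for a radial function is expressed by
integrability of `|V(φ)|^q (sin φ)^{n-1}` over `φ ∈ (0, π)`. -/
theorem stmt_2 (n : ℕ) (hn : 3 ≤ n) (V : ℝ → ℝ)
    (hV : V = fun φ =>
      (((n : ℝ) - 2) * Real.cos φ ^ 2 - Real.sin φ ^ 2) /
        (Real.sin φ ^ 2 * Real.log (Real.sin φ / 2))) :
    IntegrableOn (fun φ => |V φ| ^ ((n : ℝ) / 2) * Real.sin φ ^ (n - 1))
        (Set.Ioo 0 Real.pi) ∧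
      ∀ δ : ℝ, 0 < δ →
        ¬ IntegrableOn (fun φ => |V φ| ^ ((n : ℝ) / 2 + δ) * Real.sin φ ^ (n - 1))
            (Set.Ioo 0 Real.pi) :=
  ⟨stmt2_part1 n hn V hV, fun δ hδ => stmt2_part2 n hn V hV δ hδ⟩
end

section
/- Let n ≥ 2, p_c = 2(n+1)/(n-1), and λ ≥ 1, ε ∈ (0, λ/2). Then ∫₀^∞ r^{2/p_c} / |r² - (λ + iε)²|² dr ≤ C λ^{-2 + 2/p_c} ε^{-1} for a constant C depending only on n. -/
set_option maxHeartbeats 1000000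


open Real MeasureTheory Set

/-- The critical exponent `p_c = 2(n+1)/(n-1)`. -/
noncomputable def pc (n : ℕ) : ℝ := 2 * ((n : ℝ) + 1) / ((n : ℝ) - 1)

lemma aux_fun_eq (lam ε x : ℝ) (hε : 0 < ε) :
    ((x - lam) ^ 2 + ε ^ 2)⁻¹ = (ε ^ 2)⁻¹ * (1 + ((x - lam) / ε) ^ 2)⁻¹ := by
  rw [← mul_inv]
  congr 1
  field_simp
  ring

/-- The translated/scaled Lorentzian integral. -/
lemma aux_lorentz_eq (lam ε : ℝ) (hε : 0 < ε) :
    ∫ x : ℝ, ((x - lam) ^ 2 + ε ^ 2)⁻¹ = π / ε := by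
  calc ∫ x : ℝ, ((x - lam) ^ 2 + ε ^ 2)⁻¹
      = ∫ x : ℝ, (ε ^ 2)⁻¹ * (1 + ((x - lam) / ε) ^ 2)⁻¹ := by
        exact integral_congr_ae (Filter.Eventually.of_forall fun x => aux_fun_eq lam ε x hε)
    _ = (ε ^ 2)⁻¹ * ∫ x : ℝ, (1 + ((x - lam) / ε) ^ 2)⁻¹ := integral_const_mul _ _
    _ = (ε ^ 2)⁻¹ * ∫ x : ℝ, (1 + (x / ε) ^ 2)⁻¹ := by
        rw [integral_sub_right_eq_self (fun y : ℝ => (1 + (y / ε) ^ 2)⁻¹) lam]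
    _ = (ε ^ 2)⁻¹ * (|ε| • ∫ x : ℝ, (1 + x ^ 2)⁻¹) := by
        rw [Measure.integral_comp_div (fun y : ℝ => (1 + y ^ 2)⁻¹) ε]
    _ = π / ε := by
        rw [integral_univ_inv_one_add_sq, abs_of_pos hε, smul_eq_mul]
        field_simp

lemma aux_lorentz_integrable (lam ε : ℝ) (hε : 0 < ε) :
    Integrable (fun x : ℝ => ((x - lam) ^ 2 + ε ^ 2)⁻¹) := by
  have h1 : Integrable (fun x : ℝ => (1 + (x / ε) ^ 2)⁻¹) :=
    integrable_inv_one_add_sq.comp_div hε.ne'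
  have h2 : Integrable (fun x : ℝ => (1 + ((x - lam) / ε) ^ 2)⁻¹) :=
    h1.comp_sub_right lam
  refine (h2.const_mul ((ε ^ 2)⁻¹)).congr (Filter.Eventually.of_forall fun x => ?_)
  exact (aux_fun_eq lam ε x hε).symm

/-- for `n ≥ 2`, `p_c = 2(n+1)/(n-1)`, there is a constant `C` depending only on
`n` such that for all `λ ≥ 1` and `ε ∈ (0, λ/2)`,
`∫₀^∞ r^{2/p_c} / |r² - (λ+iε)²|² dr ≤ C λ^{-2+2/p_c} ε^{-1}`, where
`|r² - (λ+iε)²|² = (r² - λ² + ε²)² + 4λ²ε²`. -/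
theorem stmt_3 (n : ℕ) (hn : 2 ≤ n) :
    ∃ C : ℝ, 0 < C ∧ ∀ lam ε : ℝ, 1 ≤ lam → ε ∈ Set.Ioo 0 (lam / 2) →
      (∫ r in Set.Ioi (0 : ℝ),
          r ^ (2 / pc n) / ((r ^ 2 - lam ^ 2 + ε ^ 2) ^ 2 + 4 * lam ^ 2 * ε ^ 2)) ≤
        C * lam ^ (-2 + 2 / pc n) * ε⁻¹ := by
  have hn2 : (2:ℝ) ≤ (n:ℝ) := by exact_mod_cast hn
  set a : ℝ := 2 / pc n with ha_def
  have hA : a = ((n:ℝ) - 1) / ((n:ℝ) + 1) := by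
    have h1 : ((n:ℝ) - 1) ≠ 0 := by linarith
    have h2 : ((n:ℝ) + 1) ≠ 0 := by linarith
    rw [ha_def, pc]
    field_simp
  have ha0 : 0 < a := by
    rw [hA]; apply div_pos <;> linarith
  have ha1 : a < 1 := by
    rw [hA, div_lt_one (by linarith)]; linarith
  refine ⟨4 * π + 8, by positivity, ?_⟩
  intro lam ε hlam hε
  obtain ⟨hε0, hel⟩ := hε
  have hlam0 : (0:ℝ) < lam := by linarith
  have hε2 : ε ^ 2 < lam ^ 2 / 4 := by nlinarith
  have hDpos : ∀ r : ℝ, 0 < (r ^ 2 - lam ^ 2 + ε ^ 2) ^ 2 + 4 * lam ^ 2 * ε ^ 2 := by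
    intro r
    have h4 : (0:ℝ) < 4 * lam ^ 2 * ε ^ 2 :=
      mul_pos (mul_pos (by norm_num) (pow_pos hlam0 2)) (pow_pos hε0 2)
    nlinarith [sq_nonneg (r ^ 2 - lam ^ 2 + ε ^ 2)]
  set g : ℝ → ℝ := fun r =>
    4 * lam ^ (a - 2) * ((r - lam) ^ 2 + ε ^ 2)⁻¹ + 4 * (max r (2 * lam)) ^ (a - 4)
    with hg_def
  have hlam_pow : lam ^ a = lam ^ (a - 2) * lam ^ 2 := by
    rw [← Real.rpow_natCast lam 2, ← Real.rpow_add hlam0]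
    norm_num
  -- pointwise bound
  have key : ∀ r ∈ Ioi (0:ℝ), r ^ a / ((r ^ 2 - lam ^ 2 + ε ^ 2) ^ 2 + 4 * lam ^ 2 * ε ^ 2)
      ≤ g r := by
    intro r hr
    simp only [mem_Ioi] at hr
    rcases le_or_gt r (2 * lam) with hcase | hcase
    · have h2 : 0 ≤ 4 * (max r (2 * lam)) ^ (a - 4) := by
        have : (0:ℝ) ≤ max r (2 * lam) := le_max_of_le_left hr.le
        positivity
      have hnum : r ^ a ≤ 2 * lam ^ a := by
        calc r ^ a ≤ (2 * lam) ^ a := Real.rpow_le_rpow hr.le hcase ha0.le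
          _ = 2 ^ a * lam ^ a := Real.mul_rpow (by norm_num) hlam0.le
          _ ≤ 2 * lam ^ a := by
              have h21 : (2:ℝ) ^ a ≤ 2 ^ (1:ℝ) :=
                Real.rpow_le_rpow_of_exponent_le one_le_two ha1.le
              rw [Real.rpow_one] at h21
              nlinarith [Real.rpow_nonneg hlam0.le a]
      have hee : ε ^ 2 * ε ^ 2 ≤ lam ^ 2 / 4 * ε ^ 2 := by nlinarith [sq_nonneg ε]
      have hden : lam ^ 2 * ((r - lam) ^ 2 + ε ^ 2) / 2
          ≤ (r ^ 2 - lam ^ 2 + ε ^ 2) ^ 2 + 4 * lam ^ 2 * ε ^ 2 := by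
        nlinarith [sq_nonneg (r ^ 2 - lam ^ 2 + 2 * ε ^ 2),
          mul_nonneg (mul_nonneg (sq_nonneg (r - lam)) hr.le)
            (show (0:ℝ) ≤ r + 2 * lam by linarith)]
      have hd2 : (0:ℝ) < lam ^ 2 * ((r - lam) ^ 2 + ε ^ 2) / 2 := by positivity
      have hfrac : r ^ a / ((r ^ 2 - lam ^ 2 + ε ^ 2) ^ 2 + 4 * lam ^ 2 * ε ^ 2)
          ≤ 2 * lam ^ a / (lam ^ 2 * ((r - lam) ^ 2 + ε ^ 2) / 2) :=
        div_le_div₀ (by positivity) hnum hd2 hden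
      have heq : 2 * lam ^ a / (lam ^ 2 * ((r - lam) ^ 2 + ε ^ 2) / 2)
          = 4 * lam ^ (a - 2) * ((r - lam) ^ 2 + ε ^ 2)⁻¹ := by
        rw [hlam_pow]
        have h1 : ((r - lam) ^ 2 + ε ^ 2) ≠ 0 := by positivity
        field_simp
        ring
      rw [hg_def]
      simp only
      rw [heq] at hfrac
      linarith
    · have hmax : max r (2 * lam) = r := max_eq_left hcase.le
      have h1 : 0 ≤ 4 * lam ^ (a - 2) * ((r - lam) ^ 2 + ε ^ 2)⁻¹ := by positivity
      have hden : r ^ 4 / 2 ≤ (r ^ 2 - lam ^ 2 + ε ^ 2) ^ 2 + 4 * lam ^ 2 * ε ^ 2 := by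
        have hu : 3 / 4 * r ^ 2 ≤ r ^ 2 - lam ^ 2 + ε ^ 2 := by nlinarith
        have hsq : (3 / 4 * r ^ 2) ^ 2 ≤ (r ^ 2 - lam ^ 2 + ε ^ 2) ^ 2 :=
          pow_le_pow_left₀ (by positivity) hu 2
        nlinarith [mul_pos (mul_pos (show (0:ℝ) < 4 by norm_num) (pow_pos hlam0 2))
          (pow_pos hε0 2)]
      have hfrac : r ^ a / ((r ^ 2 - lam ^ 2 + ε ^ 2) ^ 2 + 4 * lam ^ 2 * ε ^ 2)
          ≤ r ^ a / (r ^ 4 / 2) := by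
        apply div_le_div_of_nonneg_left (Real.rpow_nonneg hr.le a) (by positivity) hden
      have heq : r ^ a / (r ^ 4 / 2) = 2 * r ^ (a - 4) := by
        rw [Real.rpow_sub hr]
        rw [show ((4:ℝ)) = ((4:ℕ):ℝ) by norm_num, Real.rpow_natCast]
        field_simp
      have h2 : 2 * r ^ (a - 4) ≤ 4 * r ^ (a - 4) := by
        nlinarith [Real.rpow_nonneg hr.le (a - 4)]
      rw [hg_def]
      simp only [hmax]
      rw [heq] at hfrac
      linarith
  -- integrability of g
  have hint1 : Integrable (fun x : ℝ => ((x - lam) ^ 2 + ε ^ 2)⁻¹) :=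
    aux_lorentz_integrable lam ε hε0
  have hint1on : IntegrableOn
      (fun r : ℝ => 4 * lam ^ (a - 2) * ((r - lam) ^ 2 + ε ^ 2)⁻¹) (Ioi 0) :=
    (hint1.const_mul _).integrableOn
  have hsplit : Ioc (0:ℝ) (2 * lam) ∪ Ioi (2 * lam) = Ioi (0:ℝ) :=
    Ioc_union_Ioi_eq_Ioi (by linarith)
  have hconst : IntegrableOn
      (fun r : ℝ => 4 * (max r (2 * lam)) ^ (a - 4)) (Ioc 0 (2 * lam)) := by
    apply IntegrableOn.congr_fun
      (integrableOn_const measure_Ioc_lt_top.ne)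
      (g := fun r : ℝ => 4 * (max r (2 * lam)) ^ (a - 4))
      (f := fun _ : ℝ => 4 * (2 * lam) ^ (a - 4)) ?_ measurableSet_Ioc
    intro r hr
    simp only
    rw [max_eq_right hr.2]
  have htail : IntegrableOn
      (fun r : ℝ => 4 * (max r (2 * lam)) ^ (a - 4)) (Ioi (2 * lam)) := by
    apply IntegrableOn.congr_fun
      (((integrableOn_Ioi_rpow_of_lt (show a - 4 < -1 by linarith) (show (0:ℝ) < 2 * lam by linarith)).const_mul 4))
      ?_ measurableSet_Ioi
    intro r hr
    simp only
    rw [max_eq_left (le_of_lt hr)]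
  have hint2on : IntegrableOn (fun r : ℝ => 4 * (max r (2 * lam)) ^ (a - 4)) (Ioi 0) := by
    rw [← hsplit]
    exact hconst.union htail
  have hgint : IntegrableOn g (Ioi 0) := hint1on.add hint2on
  -- monotonicity
  have hmono : (∫ r in Ioi (0:ℝ),
      r ^ a / ((r ^ 2 - lam ^ 2 + ε ^ 2) ^ 2 + 4 * lam ^ 2 * ε ^ 2))
      ≤ ∫ r in Ioi (0:ℝ), g r := by
    apply integral_mono_of_nonneg
    · filter_upwards [ae_restrict_mem measurableSet_Ioi] with r hr
      exact div_nonneg (Real.rpow_nonneg (le_of_lt hr) a) (hDpos r).le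
    · exact hgint
    · filter_upwards [ae_restrict_mem measurableSet_Ioi] with r hr using key r hr
  -- compute / bound the integral of g
  have hsplitg : (∫ r in Ioi (0:ℝ), g r)
      = (∫ r in Ioi (0:ℝ), 4 * lam ^ (a - 2) * ((r - lam) ^ 2 + ε ^ 2)⁻¹)
        + ∫ r in Ioi (0:ℝ), 4 * (max r (2 * lam)) ^ (a - 4) :=
    integral_add hint1on hint2on
  have hbound1 : (∫ r in Ioi (0:ℝ), 4 * lam ^ (a - 2) * ((r - lam) ^ 2 + ε ^ 2)⁻¹)
      ≤ 4 * lam ^ (a - 2) * (π / ε) := by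
    rw [integral_const_mul]
    have hle : (∫ r in Ioi (0:ℝ), ((r - lam) ^ 2 + ε ^ 2)⁻¹)
        ≤ ∫ r : ℝ, ((r - lam) ^ 2 + ε ^ 2)⁻¹ := by
      apply setIntegral_le_integral hint1
      filter_upwards with r
      positivity
    rw [aux_lorentz_eq lam ε hε0] at hle
    have h0 : (0:ℝ) ≤ 4 * lam ^ (a - 2) := by positivity
    exact mul_le_mul_of_nonneg_left hle h0
  have hval2 : (∫ r in Ioi (0:ℝ), 4 * (max r (2 * lam)) ^ (a - 4))
      = 4 * (2 * lam) ^ (a - 4) * (2 * lam)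
        + 4 * (-(2 * lam) ^ (a - 3) / (a - 3)) := by
    rw [← hsplit, setIntegral_union (Ioc_disjoint_Ioi le_rfl) measurableSet_Ioi hconst htail]
    congr 1
    · rw [setIntegral_congr_fun measurableSet_Ioc
        (g := fun _ : ℝ => 4 * (2 * lam) ^ (a - 4))
        (fun r hr => by simp only; rw [max_eq_right hr.2])]
      rw [setIntegral_const, Real.volume_real_Ioc_of_le (by linarith), smul_eq_mul]
      ring
    · rw [setIntegral_congr_fun measurableSet_Ioi
        (g := fun r : ℝ => 4 * r ^ (a - 4))
        (fun r hr => by simp only; rw [max_eq_left (le_of_lt hr)])]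
      rw [integral_const_mul, integral_Ioi_rpow_of_lt (show a - 4 < -1 by linarith) (show (0:ℝ) < 2 * lam by linarith)]
      rw [show a - 4 + 1 = a - 3 by ring]
  -- final numeric estimates
  have hppos : (0:ℝ) ≤ lam ^ (a - 2) := Real.rpow_nonneg hlam0.le _
  have h2l : (2 * lam) ^ (a - 4) * (2 * lam) = (2 * lam) ^ (a - 3) := by
    rw [show a - 3 = a - 4 + 1 by ring, Real.rpow_add_one (by positivity : (2 * lam) ≠ 0)]
  have h2l3 : (2 * lam) ^ (a - 3) ≤ lam ^ (a - 3) :=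
    Real.rpow_le_rpow_of_nonpos hlam0 (by linarith) (by linarith)
  have h2l3nn : (0:ℝ) ≤ (2 * lam) ^ (a - 3) := Real.rpow_nonneg (by linarith) _
  have hl3 : lam ^ (a - 3) = lam ^ (a - 2) * lam⁻¹ := by
    rw [← Real.rpow_neg_one lam, ← Real.rpow_add hlam0]
    ring_nf
  have hinv : lam⁻¹ ≤ ε⁻¹ := by
    apply inv_anti₀ hε0
    linarith
  have htail_bound : 4 * (-(2 * lam) ^ (a - 3) / (a - 3)) ≤ 2 * (lam ^ (a - 2) * ε⁻¹) := by
    have h3a : (2:ℝ) ≤ 3 - a := by linarith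
    have hx : -(2 * lam) ^ (a - 3) / (a - 3) = (2 * lam) ^ (a - 3) / (3 - a) := by
      rw [div_eq_div_iff (by linarith) (by linarith)]
      ring
    rw [hx]
    have hd : (2 * lam) ^ (a - 3) / (3 - a) ≤ (2 * lam) ^ (a - 3) / 2 :=
      div_le_div_of_nonneg_left h2l3nn (by norm_num) h3a
    have hstep : (2 * lam) ^ (a - 3) ≤ lam ^ (a - 2) * ε⁻¹ := by
      calc (2 * lam) ^ (a - 3) ≤ lam ^ (a - 3) := h2l3
        _ = lam ^ (a - 2) * lam⁻¹ := hl3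
        _ ≤ lam ^ (a - 2) * ε⁻¹ := mul_le_mul_of_nonneg_left hinv hppos
    linarith
  have hhead_bound : 4 * (2 * lam) ^ (a - 4) * (2 * lam) ≤ 4 * (lam ^ (a - 2) * ε⁻¹) := by
    rw [mul_assoc, h2l]
    have hstep : (2 * lam) ^ (a - 3) ≤ lam ^ (a - 2) * ε⁻¹ := by
      calc (2 * lam) ^ (a - 3) ≤ lam ^ (a - 3) := h2l3
        _ = lam ^ (a - 2) * lam⁻¹ := hl3
        _ ≤ lam ^ (a - 2) * ε⁻¹ := mul_le_mul_of_nonneg_left hinv hppos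
    linarith
  have hrhs : (-2 + a) = a - 2 := by ring
  rw [hrhs]
  have hfinal : (∫ r in Ioi (0:ℝ), g r) ≤ (4 * π + 8) * lam ^ (a - 2) * ε⁻¹ := by
    rw [hsplitg, hval2]
    have hεinv : (0:ℝ) ≤ ε⁻¹ := by positivity
    have : 4 * lam ^ (a - 2) * (π / ε) = 4 * π * (lam ^ (a - 2) * ε⁻¹) := by
      rw [div_eq_mul_inv]; ring
    nlinarith [mul_nonneg hppos hεinv]
  calc (∫ r in Ioi (0:ℝ),
      r ^ a / ((r ^ 2 - lam ^ 2 + ε ^ 2) ^ 2 + 4 * lam ^ 2 * ε ^ 2))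
      ≤ ∫ r in Ioi (0:ℝ), g r := hmono
    _ ≤ (4 * π + 8) * lam ^ (a - 2) * ε⁻¹ := hfinal
end

section
/- Let n = 2, λ ≥ 1, and suppose a kernel T(x,y) on a finite-measure metric measure space M satisfies |T(x,y)| ≤ C₀ λ^{-1/2} d(x,y)^{-1/2} when d(x,y) ≥ λ^{-1}, |T(x,y)| ≤ C₀ |log(λ d(x,y)/2)| when d(x,y) ≤ λ^{-1}, and T(x,y) = 0 when d(x,y) > δ. If moreover the measure of balls satisfies μ(B_r(y)) ≤ C r² for r ≤ δ, then sup_y (∫ |T(x,y)|⁶ dμ(x))^{1/6} ≤ C' λ^{-1/3}. Consequently, by Minkowski's integral inequality, ‖∫ T(·,y) g(y) dμ(y)‖_{L⁶} ≤ C' λ^{-1/3} ‖g‖_{L¹}. -/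
open MeasureTheory Real Set
open scoped ENNReal NNReal

lemma dyadic_loc {q : ℝ} (hq : 1 ≤ q) : ∃ k : ℕ, (2:ℝ)^k ≤ q ∧ q < 2^(k+1) := by
  have h0 : (0:ℝ) ≤ q := zero_le_one.trans hq
  have hfl : 1 ≤ ⌊q⌋₊ := Nat.one_le_floor_iff q |>.mpr hq
  refine ⟨Nat.log 2 ⌊q⌋₊, ?_, ?_⟩
  · calc ((2:ℝ))^Nat.log 2 ⌊q⌋₊ = ((2^Nat.log 2 ⌊q⌋₊ : ℕ) : ℝ) := by push_cast; ring
      _ ≤ (⌊q⌋₊ : ℝ) := by exact_mod_cast Nat.pow_log_le_self 2 (by omega)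
      _ ≤ q := Nat.floor_le h0
  · have h1 : ⌊q⌋₊ < 2^(Nat.log 2 ⌊q⌋₊ + 1) := Nat.lt_pow_succ_log_self (by norm_num) _
    calc q < ⌊q⌋₊ + 1 := Nat.lt_floor_add_one q
      _ ≤ ((2:ℝ))^(Nat.log 2 ⌊q⌋₊ + 1) := by exact_mod_cast Nat.succ_le_of_lt h1

lemma stmt18_key {M : Type*} [MetricSpace M] [MeasureSpace M]
    [IsFiniteMeasure (volume : Measure M)]
    {C δ B lam : ℝ} (hC : 0 < C) (hδ : 0 < δ) (hB : 0 < B) (hlam : 1 ≤ lam)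
    (hvol : ∀ (y : M) (r : ℝ), 0 < r → r ≤ δ →
      volume (Metric.ball y r) ≤ ENNReal.ofReal (C * r ^ 2))
    (y : M) (f : M → ℝ)
    (hf : ∀ x, 0 < dist x y → f x ≤ B/lam * min (1/dist x y) (1/(lam^2 * dist x y^3)))
    (hf0 : ∀ x, δ < dist x y → f x = 0) :
    ∫⁻ x, ENNReal.ofReal (f x) ≤
      ENNReal.ofReal ((48*B*C + B*(volume (univ:Set M)).toReal/δ^2)/lam^2) := by
  have hlam0 : 0 < lam := zero_lt_one.trans_le hlam
  set V : ℝ := (volume (univ:Set M)).toReal with hV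
  have hV0 : 0 ≤ V := ENNReal.toReal_nonneg
  set R : ℝ := min lam⁻¹ δ with hR
  have hR0 : 0 < R := lt_min (by positivity) hδ
  have hRlam : R ≤ lam⁻¹ := min_le_left _ _
  -- ball-type volume bound
  have hball : ∀ r : ℝ, 0 < r →
      volume {x | dist x y ≤ r ∧ dist x y < δ} ≤ ENNReal.ofReal (4*C*r^2) := by
    intro r hr
    have hsub : {x | dist x y ≤ r ∧ dist x y < δ} ⊆ Metric.ball y (min (2*r) δ) := by
      rintro x ⟨h1, h2⟩
      simp only [Metric.mem_ball]
      exact lt_min (by linarith) h2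
    refine (measure_mono hsub).trans ((hvol y _ (lt_min (by linarith) hδ) (min_le_right _ _)).trans
      (ENNReal.ofReal_le_ofReal ?_))
    have hm0 : 0 < min (2*r) δ := lt_min (by linarith) hδ
    have hm : min (2*r) δ ≤ 2*r := min_le_left _ _
    have hsq : (min (2*r) δ)^2 ≤ (2*r)^2 := pow_le_pow_left₀ hm0.le hm 2
    nlinarith [mul_le_mul_of_nonneg_left hsq hC.le]
  -- the five regions
  set N : ℕ → Set M := fun k => {x | R/2^(k+1) < dist x y ∧ dist x y ≤ R/2^k ∧ dist x y < δ}
    with hN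
  set F : ℕ → Set M := fun k =>
    {x | 2^k/lam ≤ dist x y ∧ dist x y < 2^(k+1)/lam ∧ dist x y < δ} with hF
  -- diagonal has measure zero
  have hy0 : volume {x : M | dist x y = 0} = 0 := by
    have hset : {x : M | dist x y = 0} = {y} := by
      ext x; simp [dist_eq_zero]
    rw [hset]
    refine le_antisymm (ENNReal.le_of_forall_pos_le_add fun ε hε _ => ?_) zero_le
    rw [zero_add]
    set r : ℝ := min δ (Real.sqrt (ε / C)) with hr
    have hr0 : 0 < r := lt_min hδ (Real.sqrt_pos.mpr (div_pos (by exact_mod_cast hε) hC))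
    have h1 : volume {y} ≤ ENNReal.ofReal (C * r^2) := by
      refine (measure_mono ?_).trans (hvol y r hr0 (min_le_left _ _))
      simp [Set.singleton_subset_iff, Metric.mem_ball, hr0]
    refine h1.trans ?_
    have hr2 : r^2 ≤ ε / C := by
      have h2 : r ≤ Real.sqrt (ε/C) := min_le_right _ _
      calc r^2 ≤ (Real.sqrt (ε/C))^2 := pow_le_pow_left₀ hr0.le h2 2
        _ = ε/C := Real.sq_sqrt (by positivity)
    calc ENNReal.ofReal (C*r^2) ≤ ENNReal.ofReal (C * (ε/C)) := by
          exact ENNReal.ofReal_le_ofReal (by nlinarith)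
      _ = ENNReal.ofReal (ε:ℝ) := by rw [mul_div_cancel₀ _ hC.ne']
      _ = (ε : ℝ≥0∞) := ENNReal.ofReal_coe_nnreal
  -- per-annulus bounds: near family
  have hNk : ∀ k : ℕ, ∫⁻ x in N k, ENNReal.ofReal (f x) ≤
      ENNReal.ofReal ((8*B*C/lam^2) * (1/2)^k) := by
    intro k
    have h2k : (0:ℝ) < 2^k := by positivity
    have h2k1 : (0:ℝ) < 2^(k+1) := by positivity
    have hbd : ∀ x ∈ N k, ENNReal.ofReal (f x) ≤ ENNReal.ofReal (B/lam * (2^(k+1)/R)) := by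
      rintro x ⟨h1, h2, h3⟩
      have hd0 : 0 < dist x y := lt_trans (by positivity) h1
      refine ENNReal.ofReal_le_ofReal ((hf x hd0).trans ?_)
      have h1d : 1/dist x y ≤ 2^(k+1)/R := by
        rw [div_le_div_iff₀ hd0 hR0]
        rw [div_lt_iff₀ h2k1] at h1
        nlinarith
      have hmm : min (1/dist x y) (1/(lam^2 * dist x y^3)) ≤ 2^(k+1)/R :=
        (min_le_left _ _).trans h1d
      have hBl : (0:ℝ) ≤ B/lam := by positivity
      exact mul_le_mul_of_nonneg_left hmm hBl
    calc ∫⁻ x in N k, ENNReal.ofReal (f x)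
        ≤ ∫⁻ _x in N k, ENNReal.ofReal (B/lam * (2^(k+1)/R)) :=
          setLIntegral_mono measurable_const hbd
      _ = ENNReal.ofReal (B/lam * (2^(k+1)/R)) * volume (N k) := setLIntegral_const _ _
      _ ≤ ENNReal.ofReal (B/lam * (2^(k+1)/R)) * ENNReal.ofReal (4*C*(R/2^k)^2) := by
          refine mul_le_mul_right ?_ _
          refine (measure_mono ?_).trans (hball (R/2^k) (by positivity))
          rintro x ⟨h1, h2, h3⟩
          exact ⟨h2, h3⟩
      _ = ENNReal.ofReal ((B/lam * (2^(k+1)/R)) * (4*C*(R/2^k)^2)) :=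
          (ENNReal.ofReal_mul (by positivity)).symm
      _ ≤ ENNReal.ofReal ((8*B*C/lam^2) * (1/2)^k) := by
          refine ENNReal.ofReal_le_ofReal ?_
          have heq : (B/lam * (2^(k+1)/R)) * (4*C*(R/2^k)^2) = (8*B*C*R/lam) * (1/2)^k := by
            rw [pow_succ, one_div_pow]
            field_simp
            ring
          rw [heq]
          have hRl : R * lam ≤ 1 := by
            calc R * lam ≤ lam⁻¹ * lam := by gcongr
              _ = 1 := inv_mul_cancel₀ hlam0.ne'
          have hc : 8*B*C*R/lam ≤ 8*B*C/lam^2 := by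
            rw [div_le_div_iff₀ hlam0 (by positivity)]
            calc 8*B*C*R*lam^2 = (8*B*C*lam)*(R*lam) := by ring
              _ ≤ (8*B*C*lam)*1 := mul_le_mul_of_nonneg_left hRl (by positivity)
              _ = 8*B*C*lam := mul_one _
          have hp : (0:ℝ) ≤ (1/2:ℝ)^k := by positivity
          exact mul_le_mul_of_nonneg_right hc hp
  -- far family
  have hFk : ∀ k : ℕ, ∫⁻ x in F k, ENNReal.ofReal (f x) ≤
      ENNReal.ofReal ((16*B*C/lam^2) * (1/2)^k) := by
    intro k
    have h2k : (0:ℝ) < 2^k := by positivity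
    have hrk : (0:ℝ) < 2^k/lam := by positivity
    have hbd : ∀ x ∈ F k, ENNReal.ofReal (f x) ≤
        ENNReal.ofReal (B/lam * (1/(lam^2*(2^k/lam)^3))) := by
      rintro x ⟨h1, h2, h3⟩
      have hd0 : 0 < dist x y := lt_of_lt_of_le hrk h1
      refine ENNReal.ofReal_le_ofReal ((hf x hd0).trans ?_)
      have h1d : 1/(lam^2 * dist x y^3) ≤ 1/(lam^2*(2^k/lam)^3) := by
        refine one_div_le_one_div_of_le (by positivity) ?_
        gcongr
      have hmm : min (1/dist x y) (1/(lam^2 * dist x y^3)) ≤ 1/(lam^2*(2^k/lam)^3) :=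
        (min_le_right _ _).trans h1d
      exact mul_le_mul_of_nonneg_left hmm (by positivity)
    calc ∫⁻ x in F k, ENNReal.ofReal (f x)
        ≤ ∫⁻ _x in F k, ENNReal.ofReal (B/lam * (1/(lam^2*(2^k/lam)^3))) :=
          setLIntegral_mono measurable_const hbd
      _ = ENNReal.ofReal (B/lam * (1/(lam^2*(2^k/lam)^3))) * volume (F k) :=
          setLIntegral_const _ _
      _ ≤ ENNReal.ofReal (B/lam * (1/(lam^2*(2^k/lam)^3))) *
            ENNReal.ofReal (4*C*(2^(k+1)/lam)^2) := by
          refine mul_le_mul_right ?_ _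
          refine (measure_mono ?_).trans (hball (2^(k+1)/lam) (by positivity))
          rintro x ⟨h1, h2, h3⟩
          exact ⟨h2.le, h3⟩
      _ = ENNReal.ofReal ((B/lam * (1/(lam^2*(2^k/lam)^3))) * (4*C*(2^(k+1)/lam)^2)) :=
          (ENNReal.ofReal_mul (by positivity)).symm
      _ ≤ ENNReal.ofReal ((16*B*C/lam^2) * (1/2)^k) := by
          refine ENNReal.ofReal_le_ofReal (le_of_eq ?_)
          rw [pow_succ, one_div_pow]
          field_simp
          ring
  -- geometric sums
  have hsum : ∀ c : ℝ, 0 ≤ c →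
      ∑' k : ℕ, ENNReal.ofReal (c * (1/2)^k) = ENNReal.ofReal (2*c) := by
    intro c hc
    rw [← ENNReal.ofReal_tsum_of_nonneg (fun k => by positivity)
      ((summable_geometric_of_lt_one (by norm_num) (by norm_num)).mul_left c)]
    congr 1
    rw [tsum_mul_left, tsum_geometric_of_lt_one (by norm_num) (by norm_num)]
    norm_num
    ring
  -- sphere bound
  have hsph : ∫⁻ x in {x | dist x y = δ}, ENNReal.ofReal (f x) ≤
      ENNReal.ofReal (B*V/δ^2/lam^2) := by
    have hbd : ∀ x ∈ {x : M | dist x y = δ}, ENNReal.ofReal (f x) ≤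
        ENNReal.ofReal (B/(lam^2*δ^2)) := by
      intro x hx
      have hxd : dist x y = δ := hx
      refine ENNReal.ofReal_le_ofReal ?_
      refine (hf x (by rw [hxd]; exact hδ)).trans ?_
      rw [hxd]
      have hmin : min (1/δ) (1/(lam^2*δ^3)) ≤ 1/(lam*δ^2) := by
        rcases le_total (lam*δ) 1 with hh | hh
        · refine (min_le_left _ _).trans (one_div_le_one_div_of_le (by positivity) ?_)
          calc lam*δ^2 = δ*(lam*δ) := by ring
            _ ≤ δ*1 := mul_le_mul_of_nonneg_left hh hδ.le
            _ = δ := mul_one δ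
        · refine (min_le_right _ _).trans (one_div_le_one_div_of_le (by positivity) ?_)
          calc lam*δ^2 = (lam*δ^2)*1 := (mul_one _).symm
            _ ≤ (lam*δ^2)*(lam*δ) := by
                refine mul_le_mul_of_nonneg_left hh (by positivity)
            _ = lam^2*δ^3 := by ring
      calc B/lam * min (1/δ) (1/(lam^2*δ^3)) ≤ B/lam * (1/(lam*δ^2)) :=
            mul_le_mul_of_nonneg_left hmin (by positivity)
        _ = B/(lam^2*δ^2) := by
            have h1 : lam ≠ 0 := hlam0.ne'
            have h2 : δ ≠ 0 := hδ.ne'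
            field_simp
    calc ∫⁻ x in {x | dist x y = δ}, ENNReal.ofReal (f x)
        ≤ ∫⁻ _x in {x | dist x y = δ}, ENNReal.ofReal (B/(lam^2*δ^2)) :=
          setLIntegral_mono measurable_const hbd
      _ = ENNReal.ofReal (B/(lam^2*δ^2)) * volume {x | dist x y = δ} := setLIntegral_const _ _
      _ ≤ ENNReal.ofReal (B/(lam^2*δ^2)) * volume (univ : Set M) :=
          mul_le_mul_right (measure_mono (subset_univ _)) _
      _ = ENNReal.ofReal (B/(lam^2*δ^2)) * ENNReal.ofReal V := by
          rw [hV, ENNReal.ofReal_toReal (measure_ne_top _ _)]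
      _ = ENNReal.ofReal (B/(lam^2*δ^2) * V) := (ENNReal.ofReal_mul (by positivity)).symm
      _ = ENNReal.ofReal (B*V/δ^2/lam^2) := by
          congr 1
          have h1 : lam ≠ 0 := hlam0.ne'
          have h2 : δ ≠ 0 := hδ.ne'
          field_simp
  -- outside the support
  have hout : ∫⁻ x in {x | δ < dist x y}, ENNReal.ofReal (f x) ≤ 0 := by
    have hbd : ∀ x ∈ {x : M | δ < dist x y}, ENNReal.ofReal (f x) ≤ 0 := by
      intro x hx
      rw [hf0 x hx]
      simp
    refine (setLIntegral_mono measurable_const hbd).trans ?_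
    simp
  -- coverage
  have hcover : (univ : Set M) ⊆ {x | dist x y = 0} ∪ (⋃ k, N k) ∪ (⋃ k, F k) ∪
      {x | dist x y = δ} ∪ {x | δ < dist x y} := by
    intro x _
    simp only [Set.mem_union, Set.mem_iUnion, Set.mem_setOf_eq, hN, hF]
    rcases lt_trichotomy (dist x y) δ with hlt | heq | hgt
    · rcases eq_or_lt_of_le (dist_nonneg : 0 ≤ dist x y) with h0 | h0
      · exact Or.inl (Or.inl (Or.inl (Or.inl h0.symm)))
      · rcases le_total (dist x y) R with hdR | hdR
        · obtain ⟨k, hk1, hk2⟩ := dyadic_loc (show (1:ℝ) ≤ R / dist x y from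
            (one_le_div h0).mpr hdR)
          refine Or.inl (Or.inl (Or.inl (Or.inr ⟨k, ?_, ?_, hlt⟩)))
          · rw [div_lt_iff₀ (by positivity : (0:ℝ) < 2^(k+1))]
            rw [div_lt_iff₀ h0] at hk2
            linarith
          · rw [le_div_iff₀ (by positivity : (0:ℝ) < 2^k)]
            rw [le_div_iff₀ h0] at hk1
            linarith
        · have hlamδ : lam⁻¹ ≤ δ := by
            by_contra hcon
            push_neg at hcon
            have hRδ : R = δ := min_eq_right hcon.le
            rw [hRδ] at hdR
            linarith
          have hRe : R = lam⁻¹ := min_eq_left hlamδ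
          obtain ⟨k, hk1, hk2⟩ := dyadic_loc (show (1:ℝ) ≤ lam * dist x y by
            have hld : lam⁻¹ ≤ dist x y := hRe ▸ hdR
            calc (1:ℝ) = lam * lam⁻¹ := (mul_inv_cancel₀ hlam0.ne').symm
              _ ≤ lam * dist x y := by gcongr)
          refine Or.inl (Or.inl (Or.inr ⟨k, ?_, ?_, hlt⟩))
          · rw [div_le_iff₀ hlam0]
            nlinarith
          · rw [lt_div_iff₀ hlam0]
            nlinarith
    · exact Or.inl (Or.inr heq)
    · exact Or.inr hgt
  -- assemble
  calc ∫⁻ x, ENNReal.ofReal (f x) = ∫⁻ x in (univ : Set M), ENNReal.ofReal (f x) :=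
        (setLIntegral_univ _).symm
    _ ≤ ∫⁻ x in {x | dist x y = 0} ∪ (⋃ k, N k) ∪ (⋃ k, F k) ∪
          {x | dist x y = δ} ∪ {x | δ < dist x y}, ENNReal.ofReal (f x) :=
        lintegral_mono_set hcover
    _ ≤ (((0 + ENNReal.ofReal (16*B*C/lam^2)) + ENNReal.ofReal (32*B*C/lam^2)) +
          ENNReal.ofReal (B*V/δ^2/lam^2)) + 0 := by
        refine (lintegral_union_le _ _ _).trans (add_le_add ?_ hout)
        refine (lintegral_union_le _ _ _).trans (add_le_add ?_ hsph)
        refine (lintegral_union_le _ _ _).trans (add_le_add ?_ ?_)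
        · refine (lintegral_union_le _ _ _).trans (add_le_add ?_ ?_)
          · exact le_of_eq (setLIntegral_measure_zero _ _ hy0)
          · refine (lintegral_iUnion_le _ _).trans ?_
            refine (Summable.tsum_le_tsum hNk ENNReal.summable ENNReal.summable).trans ?_
            rw [hsum (8*B*C/lam^2) (by positivity)]
            refine ENNReal.ofReal_le_ofReal (le_of_eq (by ring))
        · refine (lintegral_iUnion_le _ _).trans ?_
          refine (Summable.tsum_le_tsum hFk ENNReal.summable ENNReal.summable).trans ?_
          rw [hsum (16*B*C/lam^2) (by positivity)]
          refine ENNReal.ofReal_le_ofReal (le_of_eq (by ring))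
    _ ≤ ENNReal.ofReal ((48*B*C + B*V/δ^2)/lam^2) := by
        rw [zero_add, add_zero, ← ENNReal.ofReal_add (by positivity) (by positivity),
          ← ENNReal.ofReal_add (by positivity) (by positivity)]
        refine ENNReal.ofReal_le_ofReal (le_of_eq ?_)
        field_simp
        ring

lemma stmt18_pt {C₀ lam d t : ℝ} (hC₀ : 0 < C₀) (hlam : 1 ≤ lam) (hd : 0 < d) (ht : 0 ≤ t)
    (hfar : lam⁻¹ ≤ d → t ≤ C₀ * lam ^ (-(1:ℝ)/2) * d ^ (-(1:ℝ)/2))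
    (hnear : d ≤ lam⁻¹ → t ≤ C₀ * |Real.log (lam * d / 2)|) :
    t^6 ≤ (12*C₀)^6 / lam * min (1/d) (1/(lam^2 * d^3)) := by
  have hlam0 : 0 < lam := zero_lt_one.trans_le hlam
  rcases le_total d lam⁻¹ with h | h
  · -- near case
    have hld1 : lam * d ≤ 1 := by
      calc lam * d ≤ lam * lam⁻¹ := by gcongr
        _ = 1 := mul_inv_cancel₀ hlam0.ne'
    have hld0 : 0 < lam * d := by positivity
    set w : ℝ := 2 / (lam * d) with hw
    have hw0 : 0 < w := by positivity
    have habs : |Real.log (lam * d / 2)| = Real.log w := by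
      rw [abs_of_nonpos (Real.log_nonpos (by positivity) (by linarith)), ← Real.log_inv]
      congr 1
      rw [hw]
      field_simp
    have hlogle : Real.log w ≤ 6 * w ^ ((1:ℝ)/6) := by
      have h1 : Real.log (w ^ ((1:ℝ)/6)) = (1/6) * Real.log w := Real.log_rpow hw0 _
      have h2 : Real.log (w ^ ((1:ℝ)/6)) ≤ w ^ ((1:ℝ)/6) :=
        (Real.log_le_sub_one_of_pos (Real.rpow_pos_of_pos hw0 _)).trans
          (by linarith [Real.rpow_pos_of_pos hw0 ((1:ℝ)/6)])
      nlinarith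
    have hT : t ≤ 6 * C₀ * w ^ ((1:ℝ)/6) := by
      have := hnear h
      rw [habs] at this
      calc t ≤ C₀ * Real.log w := this
        _ ≤ C₀ * (6 * w ^ ((1:ℝ)/6)) := by gcongr
        _ = 6 * C₀ * w ^ ((1:ℝ)/6) := by ring
    have hT6 : t^6 ≤ (6*C₀)^6 * w := by
      have hrp : ((w ^ ((1:ℝ)/6)) ^ (6:ℕ)) = w := by
        rw [← Real.rpow_natCast (w ^ ((1:ℝ)/6)) 6, ← Real.rpow_mul hw0.le]; norm_num
      calc t^6 ≤ (6 * C₀ * w ^ ((1:ℝ)/6))^6 := by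
            exact pow_le_pow_left₀ ht hT 6
        _ = (6*C₀)^6 * ((w ^ ((1:ℝ)/6)) ^ (6:ℕ)) := by ring
        _ = (6*C₀)^6 * w := by rw [hrp]
    have hmin : min (1/d) (1/(lam^2 * d^3)) = 1/d := by
      refine min_eq_left (one_div_le_one_div_of_le (by positivity) ?_)
      calc lam^2 * d^3 = d * ((lam*d)*(lam*d)) := by ring
        _ ≤ d * 1 := by
            refine mul_le_mul_of_nonneg_left ?_ hd.le
            nlinarith
        _ = d := mul_one d
    rw [hmin]
    calc t^6 ≤ (6*C₀)^6 * w := hT6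
      _ = 2*(6*C₀)^6 / lam * (1/d) := by rw [hw]; field_simp
      _ ≤ (12*C₀)^6 / lam * (1/d) := by
          have : 2*(6*C₀)^6 ≤ (12*C₀)^6 := by nlinarith [pow_pos hC₀ 6, sq_nonneg C₀]
          gcongr
  · -- far case
    have hld1 : 1 ≤ lam * d := by
      calc (1:ℝ) = lam * lam⁻¹ := (mul_inv_cancel₀ hlam0.ne').symm
        _ ≤ lam * d := by gcongr
    have hT := hfar h
    have hl6 : (lam ^ (-(1:ℝ)/2)) ^ (6:ℕ) = 1 / lam^3 := by
      rw [← Real.rpow_natCast (lam ^ (-(1:ℝ)/2)) 6, ← Real.rpow_mul hlam0.le]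
      norm_num
    have hd6 : (d ^ (-(1:ℝ)/2)) ^ (6:ℕ) = 1 / d^3 := by
      rw [← Real.rpow_natCast (d ^ (-(1:ℝ)/2)) 6, ← Real.rpow_mul hd.le]
      norm_num
    have hmin : min (1/d) (1/(lam^2 * d^3)) = 1/(lam^2 * d^3) := by
      refine min_eq_right (one_div_le_one_div_of_le hd ?_)
      calc d = d * 1 := (mul_one d).symm
        _ ≤ d * ((lam*d)*(lam*d)) := by
            refine mul_le_mul_of_nonneg_left ?_ hd.le
            nlinarith
        _ = lam^2 * d^3 := by ring
    rw [hmin]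
    calc t^6 ≤ (C₀ * lam ^ (-(1:ℝ)/2) * d ^ (-(1:ℝ)/2))^6 := pow_le_pow_left₀ ht hT 6
      _ = C₀^6 * ((lam ^ (-(1:ℝ)/2)) ^ (6:ℕ)) * ((d ^ (-(1:ℝ)/2)) ^ (6:ℕ)) := by ring
      _ = C₀^6 * (1/lam^3) * (1/d^3) := by rw [hl6, hd6]
      _ = C₀^6 / lam * (1/(lam^2 * d^3)) := by field_simp
      _ ≤ (12*C₀)^6 / lam * (1/(lam^2 * d^3)) := by
          have : C₀^6 ≤ (12*C₀)^6 := by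
            have := pow_le_pow_left₀ hC₀.le (by linarith : C₀ ≤ 12*C₀) 6
            linarith
          gcongr

/-- the two-dimensional kernel bound.  If for `λ ≥ 1` a kernel `T` on a
finite-measure metric measure space with two-dimensional volume growth satisfies
`|T(x,y)| ≤ C₀ λ^{-1/2} d(x,y)^{-1/2}` for `d(x,y) ≥ λ^{-1}`,
`|T(x,y)| ≤ C₀ |log(λ d(x,y)/2)|` for `0 < d(x,y) ≤ λ^{-1}`, and `T(x,y) = 0` for
`d(x,y) > δ`, then `sup_y (∫ |T(x,y)|⁶ dx)^{1/6} ≤ C' λ^{-1/3}`, and consequently, by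
Minkowski's integral inequality, `‖∫ T(·,y) g(y) dy‖_{L⁶} ≤ C' λ^{-1/3} ‖g‖_{L¹}`. -/
theorem stmt_18 {M : Type*} [MetricSpace M] [MeasureSpace M]
    [IsFiniteMeasure (volume : Measure M)]
    (C₀ C δ : ℝ) (hC₀ : 0 < C₀) (hC : 0 < C) (hδ : 0 < δ)
    (hvol : ∀ (y : M) (r : ℝ), 0 < r → r ≤ δ →
      volume (Metric.ball y r) ≤ ENNReal.ofReal (C * r ^ 2)) :
    ∃ C' : ℝ, 0 < C' ∧ ∀ lam : ℝ, 1 ≤ lam → ∀ T : M → M → ℂ, Measurable (Function.uncurry T) →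
      (∀ x y, lam⁻¹ ≤ dist x y →
        ‖T x y‖ ≤ C₀ * lam ^ (-(1 : ℝ) / 2) * dist x y ^ (-(1 : ℝ) / 2)) →
      (∀ x y, 0 < dist x y → dist x y ≤ lam⁻¹ →
        ‖T x y‖ ≤ C₀ * |Real.log (lam * dist x y / 2)|) →
      (∀ x y, δ < dist x y → T x y = 0) →
      (∀ y, (∫ x, ‖T x y‖ ^ 6) ^ ((1 : ℝ) / 6) ≤ C' * lam ^ (-(1 : ℝ) / 3)) ∧
        ∀ g : M → ℂ, Integrable g →
          (∫ x, ‖∫ y, T x y * g y‖ ^ 6) ^ ((1 : ℝ) / 6) ≤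
            C' * lam ^ (-(1 : ℝ) / 3) * ∫ y, ‖g y‖ := by
  classical
  have hB0 : (0:ℝ) < (12*C₀)^6 := by positivity
  have hV0 : (0:ℝ) ≤ (volume (univ : Set M)).toReal := ENNReal.toReal_nonneg
  refine ⟨max 1 ((48*((12*C₀)^6)*C + ((12*C₀)^6)*(volume (univ : Set M)).toReal/δ^2) ^ ((1:ℝ)/6)),
    lt_of_lt_of_le one_pos (le_max_left _ _), ?_⟩
  set K : ℝ := 48*((12*C₀)^6)*C + ((12*C₀)^6)*(volume (univ : Set M)).toReal/δ^2 with hKdef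
  have hK0 : 0 < K := by positivity
  intro lam hlam T hTmeas hfar hnear hsupp
  have hlam0 : 0 < lam := zero_lt_one.trans_le hlam
  -- the key lintegral bound
  have hkey : ∀ y : M, ∫⁻ x, ENNReal.ofReal (‖T x y‖^6) ≤ ENNReal.ofReal (K/lam^2) := by
    intro y
    have h := stmt18_key (M := M) hC hδ hB0 hlam hvol y (fun x => ‖T x y‖^6)
      (fun x hx => stmt18_pt hC₀ hlam hx (norm_nonneg _)
        (fun h => hfar x y h) (fun h => hnear x y hx h))
      (fun x hx => by show ‖T x y‖^6 = 0; rw [hsupp x y hx]; simp)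
    calc ∫⁻ x, ENNReal.ofReal (‖T x y‖^6)
        ≤ ENNReal.ofReal ((48*((12*C₀)^6)*C +
            ((12*C₀)^6)*(volume (univ:Set M)).toReal/δ^2)/lam^2) := by
          refine h.trans (ENNReal.ofReal_le_ofReal (le_of_eq ?_))
          ring
      _ = ENNReal.ofReal (K/lam^2) := by rw [hKdef]
  -- finishing rpow computation
  have hfinish : ∀ t : ℝ, 0 ≤ t → t ≤ K/lam^2 →
      t ^ ((1:ℝ)/6) ≤ max 1 (K ^ ((1:ℝ)/6)) * lam ^ (-(1:ℝ)/3) := by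
    intro t ht htK
    have h1 : t ^ ((1:ℝ)/6) ≤ (K/lam^2) ^ ((1:ℝ)/6) :=
      Real.rpow_le_rpow ht htK (by norm_num)
    have h2 : (K/lam^2) ^ ((1:ℝ)/6) = K ^ ((1:ℝ)/6) * lam ^ (-(1:ℝ)/3) := by
      rw [Real.div_rpow hK0.le (by positivity), ← Real.rpow_natCast lam 2,
        ← Real.rpow_mul hlam0.le, div_eq_mul_inv, ← Real.rpow_neg hlam0.le]
      norm_num
    refine h1.trans ?_
    rw [h2]
    exact mul_le_mul_of_nonneg_right (le_max_right _ _) (Real.rpow_nonneg hlam0.le _)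
  have hmeasTy : ∀ y : M, Measurable fun x => T x y := by
    intro y
    exact hTmeas.comp (measurable_id.prodMk measurable_const)
  constructor
  · -- part 1
    intro y
    have hmeas6 : AEStronglyMeasurable (fun x => ‖T x y‖^6) volume :=
      (((hmeasTy y).norm.pow_const 6)).aestronglyMeasurable
    have hint1 : (∫ x, ‖T x y‖^6) ≤ K/lam^2 := by
      rw [integral_eq_lintegral_of_nonneg_ae
        (Filter.Eventually.of_forall fun x => by positivity) hmeas6]
      calc (∫⁻ x, ENNReal.ofReal (‖T x y‖^6)).toReal
          ≤ (ENNReal.ofReal (K/lam^2)).toReal :=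
            ENNReal.toReal_mono ENNReal.ofReal_ne_top (hkey y)
        _ = K/lam^2 := ENNReal.toReal_ofReal (by positivity)
    exact hfinish _ (integral_nonneg fun x => by positivity) hint1
  · -- part 2
    intro g hg
    set G : ℝ := ∫ y, ‖g y‖ with hGdef
    have hG0 : 0 ≤ G := integral_nonneg fun y => norm_nonneg _
    have hGe : ∫⁻ y, (‖g y‖₊ : ℝ≥0∞) = ENNReal.ofReal G :=
      (ofReal_integral_norm_eq_lintegral_enorm hg).symm
    have hGetop : (ENNReal.ofReal G) ≠ ⊤ := ENNReal.ofReal_ne_top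
    have hgm : AEMeasurable (fun y => (‖g y‖₊ : ℝ≥0∞)) volume := hg.1.enorm
    -- Hölder per x
    have hholder : ∀ x : M,
        (∫⁻ y, (‖T x y‖₊ : ℝ≥0∞) * (‖g y‖₊ : ℝ≥0∞)) ^ (6:ℝ) ≤
          (∫⁻ y, ((‖T x y‖₊ : ℝ≥0∞) ^ (6:ℝ)) * (‖g y‖₊ : ℝ≥0∞)) *
            (ENNReal.ofReal G) ^ (5:ℝ) := by
      intro x
      have hTym : Measurable fun y => ((‖T x y‖₊ : ℝ≥0∞)) :=
        (hTmeas.comp (measurable_const.prodMk measurable_id)).enorm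
      have hf1 : AEMeasurable (fun y => (‖T x y‖₊ : ℝ≥0∞) * (‖g y‖₊ : ℝ≥0∞) ^ ((1:ℝ)/6))
          volume := hTym.aemeasurable.mul
        ((ENNReal.continuous_rpow_const.measurable.comp_aemeasurable hgm))
      have hf2 : AEMeasurable (fun y => (‖g y‖₊ : ℝ≥0∞) ^ ((5:ℝ)/6)) volume :=
        ENNReal.continuous_rpow_const.measurable.comp_aemeasurable hgm
      have hpq : Real.HolderConjugate 6 (6/5) := Real.holderConjugate_iff.mpr ⟨by norm_num, by norm_num⟩
      have hH := ENNReal.lintegral_mul_le_Lp_mul_Lq volume hpq hf1 hf2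
      have he1 : ∀ y, ((fun y => (‖T x y‖₊ : ℝ≥0∞) * (‖g y‖₊ : ℝ≥0∞) ^ ((1:ℝ)/6)) *
          (fun y => (‖g y‖₊ : ℝ≥0∞) ^ ((5:ℝ)/6))) y =
          (‖T x y‖₊ : ℝ≥0∞) * (‖g y‖₊ : ℝ≥0∞) := by
        intro y
        simp only [Pi.mul_apply]
        rw [mul_assoc, ← ENNReal.rpow_add_of_nonneg _ _ (by norm_num) (by norm_num)]
        norm_num
      have he2 : ∀ y, ((‖T x y‖₊ : ℝ≥0∞) * (‖g y‖₊ : ℝ≥0∞) ^ ((1:ℝ)/6)) ^ (6:ℝ) =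
          ((‖T x y‖₊ : ℝ≥0∞) ^ (6:ℝ)) * (‖g y‖₊ : ℝ≥0∞) := by
        intro y
        rw [ENNReal.mul_rpow_of_nonneg _ _ (by norm_num), ← ENNReal.rpow_mul]
        norm_num
      have he3 : ∀ y, ((‖g y‖₊ : ℝ≥0∞) ^ ((5:ℝ)/6)) ^ ((6:ℝ)/5) = (‖g y‖₊ : ℝ≥0∞) := by
        intro y
        rw [← ENNReal.rpow_mul]
        norm_num
      rw [lintegral_congr he1] at hH
      simp only [he2] at hH
      calc (∫⁻ y, (‖T x y‖₊ : ℝ≥0∞) * (‖g y‖₊ : ℝ≥0∞)) ^ (6:ℝ)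
          ≤ ((∫⁻ y, ((‖T x y‖₊ : ℝ≥0∞) ^ (6:ℝ)) * (‖g y‖₊ : ℝ≥0∞)) ^ ((1:ℝ)/6) *
              (∫⁻ y, ((‖g y‖₊ : ℝ≥0∞) ^ ((5:ℝ)/6)) ^ ((6:ℝ)/5)) ^ ((1:ℝ)/((6:ℝ)/5))) ^ (6:ℝ) :=
            ENNReal.rpow_le_rpow hH (by norm_num)
        _ = ((∫⁻ y, ((‖T x y‖₊ : ℝ≥0∞) ^ (6:ℝ)) * (‖g y‖₊ : ℝ≥0∞)) ^ ((1:ℝ)/6) *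
              (ENNReal.ofReal G) ^ ((1:ℝ)/((6:ℝ)/5))) ^ (6:ℝ) := by
            rw [lintegral_congr he3, hGe]
        _ = (∫⁻ y, ((‖T x y‖₊ : ℝ≥0∞) ^ (6:ℝ)) * (‖g y‖₊ : ℝ≥0∞)) *
              (ENNReal.ofReal G) ^ (5:ℝ) := by
            rw [ENNReal.mul_rpow_of_nonneg _ _ (by norm_num : (0:ℝ) ≤ 6),
              ← ENNReal.rpow_mul, ← ENNReal.rpow_mul]
            norm_num
    -- measurability of the bilinear expression
    have hTg_aesm : AEStronglyMeasurable (fun p : M × M => T p.1 p.2 * g p.2)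
        (volume.prod volume) := by
      have h1 : AEStronglyMeasurable (fun p : M × M => T p.1 p.2) (volume.prod volume) :=
        hTmeas.aestronglyMeasurable
      exact h1.mul hg.1.comp_snd
    have hH_aesm : AEStronglyMeasurable (fun x => ∫ y, T x y * g y) volume :=
      hTg_aesm.integral_prod_right'
    have hH6_aesm : AEStronglyMeasurable (fun x => ‖∫ y, T x y * g y‖^6) volume :=
      (hH_aesm.norm.aemeasurable.pow_const 6).aestronglyMeasurable
    have hstep1 : ∀ x : M, ENNReal.ofReal (‖∫ y, T x y * g y‖^6) ≤
        (∫⁻ y, (‖T x y‖₊ : ℝ≥0∞) * (‖g y‖₊ : ℝ≥0∞)) ^ (6:ℝ) := by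
      intro x
      have h1 : (‖∫ y, T x y * g y‖₊ : ℝ≥0∞) ≤ ∫⁻ y, (‖T x y * g y‖₊ : ℝ≥0∞) :=
        enorm_integral_le_lintegral_enorm _
      have h2 : (∫⁻ y, (‖T x y * g y‖₊ : ℝ≥0∞)) =
          ∫⁻ y, (‖T x y‖₊ : ℝ≥0∞) * (‖g y‖₊ : ℝ≥0∞) :=
        lintegral_congr fun y => by rw [nnnorm_mul, ENNReal.coe_mul]
      calc ENNReal.ofReal (‖∫ y, T x y * g y‖^6)
          = ((‖∫ y, T x y * g y‖₊ : ℝ≥0∞)) ^ (6:ℝ) := by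
            rw [show ((6:ℝ)) = ((6:ℕ):ℝ) by norm_num, ENNReal.rpow_natCast,
              ← enorm_eq_nnnorm, ← ofReal_norm, ← ENNReal.ofReal_pow (norm_nonneg _)]
        _ ≤ (∫⁻ y, (‖T x y‖₊ : ℝ≥0∞) * (‖g y‖₊ : ℝ≥0∞)) ^ (6:ℝ) :=
            ENNReal.rpow_le_rpow (h1.trans (le_of_eq h2)) (by norm_num)
    -- the double integral estimate
    have hWswap : ∫⁻ x, (∫⁻ y, ((‖T x y‖₊ : ℝ≥0∞) ^ (6:ℝ)) * (‖g y‖₊ : ℝ≥0∞)) ≤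
        ENNReal.ofReal (K/lam^2) * ENNReal.ofReal G := by
      have haem : AEMeasurable (Function.uncurry fun x y =>
          ((‖T x y‖₊ : ℝ≥0∞) ^ (6:ℝ)) * (‖g y‖₊ : ℝ≥0∞)) (volume.prod volume) := by
        have h1 : Measurable (fun p : M × M => ((‖T p.1 p.2‖₊ : ℝ≥0∞) ^ (6:ℝ))) :=
          ENNReal.continuous_rpow_const.measurable.comp hTmeas.enorm
        have h2 : AEMeasurable (fun p : M × M => (‖g p.2‖₊ : ℝ≥0∞)) (volume.prod volume) :=
          hgm.comp_snd
        exact h1.aemeasurable.mul h2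
      rw [lintegral_lintegral_swap haem]
      have hinner : ∀ y : M, ∫⁻ x, ((‖T x y‖₊ : ℝ≥0∞) ^ (6:ℝ)) * (‖g y‖₊ : ℝ≥0∞) ≤
          ENNReal.ofReal (K/lam^2) * (‖g y‖₊ : ℝ≥0∞) := by
        intro y
        rw [lintegral_mul_const' _ _ ENNReal.coe_ne_top]
        refine mul_le_mul_left ?_ _
        have heq : ∀ x : M, ((‖T x y‖₊ : ℝ≥0∞) ^ (6:ℝ)) = ENNReal.ofReal (‖T x y‖^6) := by
          intro x
          rw [show ((6:ℝ)) = ((6:ℕ):ℝ) by norm_num, ENNReal.rpow_natCast,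
            ← enorm_eq_nnnorm, ← ofReal_norm, ← ENNReal.ofReal_pow (norm_nonneg _)]
        rw [lintegral_congr heq]
        exact hkey y
      refine (lintegral_mono hinner).trans ?_
      rw [lintegral_const_mul' _ _ ENNReal.ofReal_ne_top, hGe]
    have hmain : ∫⁻ x, ENNReal.ofReal (‖∫ y, T x y * g y‖^6) ≤
        ENNReal.ofReal (K/lam^2 * G^6) := by
      calc ∫⁻ x, ENNReal.ofReal (‖∫ y, T x y * g y‖^6)
          ≤ ∫⁻ x, (∫⁻ y, ((‖T x y‖₊ : ℝ≥0∞) ^ (6:ℝ)) * (‖g y‖₊ : ℝ≥0∞)) *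
              (ENNReal.ofReal G) ^ (5:ℝ) :=
            lintegral_mono fun x => (hstep1 x).trans (hholder x)
        _ = (∫⁻ x, ∫⁻ y, ((‖T x y‖₊ : ℝ≥0∞) ^ (6:ℝ)) * (‖g y‖₊ : ℝ≥0∞)) *
              (ENNReal.ofReal G) ^ (5:ℝ) :=
            lintegral_mul_const' _ _ (ENNReal.rpow_ne_top_of_nonneg (by norm_num) hGetop)
        _ ≤ (ENNReal.ofReal (K/lam^2) * ENNReal.ofReal G) * (ENNReal.ofReal G) ^ (5:ℝ) :=
            mul_le_mul_left hWswap _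
        _ = ENNReal.ofReal (K/lam^2 * G^6) := by
            rw [show ((5:ℝ)) = ((5:ℕ):ℝ) by norm_num, ENNReal.rpow_natCast,
              ← ENNReal.ofReal_pow hG0, ← ENNReal.ofReal_mul (by positivity),
              ← ENNReal.ofReal_mul (by positivity)]
            congr 1
            ring
    have hintle : (∫ x, ‖∫ y, T x y * g y‖^6) ≤ K/lam^2 * G^6 := by
      rw [integral_eq_lintegral_of_nonneg_ae
        (Filter.Eventually.of_forall fun x => by positivity) hH6_aesm]
      calc (∫⁻ x, ENNReal.ofReal (‖∫ y, T x y * g y‖^6)).toReal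
          ≤ (ENNReal.ofReal (K/lam^2 * G^6)).toReal :=
            ENNReal.toReal_mono ENNReal.ofReal_ne_top hmain
        _ = K/lam^2 * G^6 := ENNReal.toReal_ofReal (by positivity)
    have h0 : 0 ≤ ∫ x, ‖∫ y, T x y * g y‖^6 := integral_nonneg fun x => by positivity
    calc (∫ x, ‖∫ y, T x y * g y‖^6) ^ ((1:ℝ)/6)
        ≤ (K/lam^2 * G^6) ^ ((1:ℝ)/6) := Real.rpow_le_rpow h0 hintle (by norm_num)
      _ = (K/lam^2) ^ ((1:ℝ)/6) * G := by
          rw [Real.mul_rpow (by positivity) (by positivity), ← Real.rpow_natCast G 6,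
            ← Real.rpow_mul hG0]
          norm_num
      _ ≤ max 1 (K ^ ((1:ℝ)/6)) * lam ^ (-(1:ℝ)/3) * G :=
          mul_le_mul_of_nonneg_right (hfinish _ (by positivity) le_rfl) hG0
end
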